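/- Let Σ be a signed graph whose underlying graph is a 2-connected block B, let e be an edge lying in a circle C, and suppose there is a bridge D of C with at least three vertices of attachment. Then e lies in at least two circles of the same sign as C; in particular, e is not contained in a unique circle of that sign. -/

import Mathlib

open SimpleGraph Finset

variable {V : Type*} [DecidableEq V]

/-- The sign (product of edge signs) of a finite set of edges. -/
def esign (σ : Sym2 V → ℤˣ) (s : Finset (Sym2 V)) : ℤˣ := ∏ e ∈ s, σ e

/-- The sign of a walk: the product of the signs of its edges. -/
def wsign (σ : Sym2 V → ℤˣ) {G : SimpleGraph V} {u v : V} (w : G.Walk u v) : ℤˣ :=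
  (w.edges.map σ).prod

/-- `s` is the edge set of a circle (cycle) of `G`. -/
def IsCircleOf (G : SimpleGraph V) (s : Finset (Sym2 V)) : Prop :=
  ∃ (a : V) (w : G.Walk a a), w.IsCycle ∧ w.edges.toFinset = s

/-- The signature obtained from `σ` by switching with `ζ`. -/
def switchSign (σ : Sym2 V → ℤˣ) (ζ : V → ℤˣ) : Sym2 V → ℤˣ :=
  fun e => Sym2.lift ⟨fun a b => ζ a * σ s(a, b) * ζ b, by
    intro a b
    simp only []
    rw [Sym2.eq_swap]
    simp [mul_comm, mul_assoc, mul_left_comm]⟩ e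

/-- `b` is a balancing edge: one can switch so that `b` is the unique negative edge. -/
def IsBalancingEdge (G : SimpleGraph V) (σ : Sym2 V → ℤˣ) (b : Sym2 V) : Prop :=
  b ∈ G.edgeSet ∧ ∃ ζ : V → ℤˣ, ∀ f ∈ G.edgeSet, (switchSign σ ζ f = -1 ↔ f = b)

/-- `F` is the edge set of a bridge of the circle `w` in `G`: either a single
chord of `w`, or the edge set attached to a connected component of `G` minus
the vertices of `w`. -/
def IsBridgeOf {a : V} (G : SimpleGraph V) (w : G.Walk a a) (F : Set (Sym2 V)) : Prop :=
  (∃ x y : V, x ≠ y ∧ x ∈ w.support ∧ y ∈ w.support ∧ G.Adj x y ∧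
      s(x, y) ∉ w.edges ∧ F = {s(x, y)}) ∨
  (∃ D : Set V, D.Nonempty ∧ (∀ x ∈ D, x ∉ w.support) ∧ (G.induce D).Connected ∧
      (∀ x ∈ D, ∀ y : V, G.Adj x y → y ∈ D ∨ y ∈ w.support) ∧
      F = {e | e ∈ G.edgeSet ∧ ∃ x ∈ D, x ∈ e})

/-- The vertices of attachment of a bridge with edge set `F`. -/
def attachments {a : V} (G : SimpleGraph V) (w : G.Walk a a) (F : Set (Sym2 V)) : Set V :=
  {x | x ∈ w.support ∧ ∃ e ∈ F, x ∈ e}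

/-- A path through a bridge: a path between two distinct vertices of attachment
all of whose edges lie in the bridge. -/
def IsPathThrough {a : V} (G : SimpleGraph V) (w : G.Walk a a) (F : Set (Sym2 V))
    {x y : V} (Q : G.Walk x y) : Prop :=
  x ≠ y ∧ x ∈ attachments G w F ∧ y ∈ attachments G w F ∧ Q.IsPath ∧
    ∀ e ∈ Q.edges, e ∈ F

/-- `G` is a block: it is connected and has no cutpoint. -/
def IsBlock (G : SimpleGraph V) : Prop :=
  G.Connected ∧ ∀ v : V, ((⊤ : G.Subgraph).deleteVerts {v}).coe.Connected

section AuxLemmas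
set_option linter.unusedSectionVars false

open SimpleGraph Walk

variable {G : SimpleGraph V}

lemma wsign_append {u v x : V} (σ : Sym2 V → ℤˣ) (p : G.Walk u v) (q : G.Walk v x) :
    wsign σ (p.append q) = wsign σ p * wsign σ q := by
  simp [wsign, Walk.edges_append]

lemma wsign_reverse {u v : V} (σ : Sym2 V → ℤˣ) (p : G.Walk u v) :
    wsign σ p.reverse = wsign σ p := by
  simp [wsign, Walk.edges_reverse, List.prod_reverse]

lemma esign_eq_wsign {u v : V} (σ : Sym2 V → ℤˣ) {p : G.Walk u v} (h : p.edges.Nodup) :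
    esign σ p.edges.toFinset = wsign σ p :=
  List.prod_toFinset σ h

lemma isPath_append' {u v x : V} {p : G.Walk u v} {q : G.Walk v x}
    (hp : p.IsPath) (hq : q.IsPath)
    (h : ∀ y, y ∈ p.support → y ∈ q.support → y = v) :
    (p.append q).IsPath := by
  apply Walk.IsPath.mk'
  rw [Walk.support_append]
  refine List.Nodup.append hp.support_nodup
    (hq.support_nodup.sublist (List.tail_sublist _)) ?_
  intro y hyp hyq
  have hyv := h y hyp (List.mem_of_mem_tail hyq)
  subst hyv
  have := hq.support_nodup
  rw [q.support_eq_cons] at this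
  exact (List.nodup_cons.mp this).1 hyq

lemma isCycle_append' {u v : V} {p : G.Walk u v} {q : G.Walk v u} (hne : u ≠ v)
    (hp : p.IsPath) (hq : q.IsPath)
    (hsup : ∀ y, y ∈ p.support → y ∈ q.support → y = u ∨ y = v)
    (hedg : ∀ f ∈ p.edges, f ∉ q.edges) :
    (p.append q).IsCycle := by
  rw [Walk.isCycle_def]
  refine ⟨⟨?_⟩, ?_, ?_⟩
  · rw [Walk.edges_append]
    exact List.Nodup.append hp.isTrail.edges_nodup hq.isTrail.edges_nodup hedg
  · intro h
    apply hne
    have hl : (p.append q).length = 0 := by rw [h]; rfl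
    rw [Walk.length_append] at hl
    exact Walk.eq_of_length_eq_zero (Nat.eq_zero_of_add_eq_zero_right hl)
  · rw [Walk.support_append, List.tail_append_of_ne_nil (Walk.support_ne_nil _)]
    refine List.Nodup.append (hp.support_nodup.sublist (List.tail_sublist _))
      (hq.support_nodup.sublist (List.tail_sublist _)) ?_
    intro y hyp hyq
    rcases hsup y (List.mem_of_mem_tail hyp) (List.mem_of_mem_tail hyq) with rfl | rfl
    · have := hp.support_nodup
      rw [p.support_eq_cons] at this
      exact (List.nodup_cons.mp this).1 hyp
    · have := hq.support_nodup
      rw [q.support_eq_cons] at this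
      exact (List.nodup_cons.mp this).1 hyq

end AuxLemmas
section AuxLemmas2
set_option linter.unusedSectionVars false

open SimpleGraph Walk

variable {G : SimpleGraph V}

lemma cycle_decomp2 {u v : V} {p : G.Walk u v} {q : G.Walk v u} (hne : u ≠ v)
    (hc : (p.append q).IsCycle) :
    p.IsPath ∧ q.IsPath ∧ (∀ y, y ∈ p.support → y ∈ q.support → y = u ∨ y = v) ∧
      (∀ f ∈ p.edges, f ∉ q.edges) := by
  have htr := hc.isTrail.edges_nodup
  rw [Walk.edges_append, List.nodup_append] at htr
  have hst := hc.support_nodup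
  rw [Walk.support_append, List.tail_append_of_ne_nil (Walk.support_ne_nil _)] at hst
  rw [List.nodup_append] at hst
  obtain ⟨hpt, hqt, hdisj⟩ := hst
  have hup : u ∉ p.support.tail := by
    intro h
    exact hdisj _ h _ (by
      have : u ∈ q.support := q.end_mem_support
      rw [q.support_eq_cons] at this
      rcases List.mem_cons.mp this with h' | h'
      · exact absurd h' hne
      · exact h') rfl
  have hvq : v ∉ q.support.tail := by
    intro h
    refine hdisj _ ?_ _ h rfl
    have : v ∈ p.support := p.end_mem_support
    rw [p.support_eq_cons] at this
    rcases List.mem_cons.mp this with h' | h'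
    · exact absurd h'.symm hne
    · exact h'
  refine ⟨Walk.IsPath.mk' ?_, Walk.IsPath.mk' ?_, ?_, ?_⟩
  · rw [p.support_eq_cons]; exact List.nodup_cons.mpr ⟨hup, hpt⟩
  · rw [q.support_eq_cons]; exact List.nodup_cons.mpr ⟨hvq, hqt⟩
  · intro y hyp hyq
    rw [p.support_eq_cons] at hyp
    rw [q.support_eq_cons] at hyq
    rcases List.mem_cons.mp hyp with rfl | hyp
    · exact Or.inl rfl
    rcases List.mem_cons.mp hyq with rfl | hyq
    · exact Or.inr rfl
    · exact absurd rfl (hdisj _ hyp _ hyq)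
  · exact fun f hf hf' => htr.2.2 f hf f hf' rfl

lemma isCycle_rotate2 {u v : V} {p : G.Walk u v} {q : G.Walk v u} (hne : u ≠ v)
    (hc : (p.append q).IsCycle) : (q.append p).IsCycle := by
  obtain ⟨hp, hq, hs, he⟩ := cycle_decomp2 hne hc
  refine isCycle_append' hne.symm hq hp ?_ ?_
  · exact fun y hyq hyp => (hs y hyp hyq).symm
  · intro f hf hf'
    exact he f hf' hf

lemma split3 {x y : V} (p : G.Walk x y) (v z : V) (hv : v ∈ p.support)
    (hz : z ∈ p.support) (hvz : v ≠ z) :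
    (∃ (B1 : G.Walk x v) (B2 : G.Walk v z) (B3 : G.Walk z y),
       p = B1.append (B2.append B3)) ∨
    (∃ (B1 : G.Walk x z) (B2 : G.Walk z v) (B3 : G.Walk v y),
       p = B1.append (B2.append B3)) := by
  induction p with
  | nil =>
    simp only [Walk.support_nil, List.mem_singleton] at hv hz
    exact absurd (hv.trans hz.symm) hvz
  | @cons x b y h q ih =>
    by_cases hxv : x = v
    · subst hxv
      have hz' : z ∈ q.support := by
        rcases List.mem_cons.mp (Walk.support_cons h q ▸ hz : z ∈ x :: q.support) with rfl | h'
        · exact absurd rfl hvz.symm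
        · exact h'
      refine Or.inl ⟨Walk.nil, Walk.cons h (q.takeUntil z hz'), q.dropUntil z hz', ?_⟩
      rw [Walk.nil_append, Walk.cons_append, Walk.take_spec]
    · by_cases hxz : x = z
      · subst hxz
        have hv' : v ∈ q.support := by
          rcases List.mem_cons.mp (Walk.support_cons h q ▸ hv : v ∈ x :: q.support) with rfl | h'
          · exact absurd rfl hvz
          · exact h'
        refine Or.inr ⟨Walk.nil, Walk.cons h (q.takeUntil v hv'), q.dropUntil v hv', ?_⟩
        rw [Walk.nil_append, Walk.cons_append, Walk.take_spec]
      · have hv' : v ∈ q.support := by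
          rcases List.mem_cons.mp (Walk.support_cons h q ▸ hv : v ∈ x :: q.support) with rfl | h'
          · exact absurd rfl hxv
          · exact h'
        have hz' : z ∈ q.support := by
          rcases List.mem_cons.mp (Walk.support_cons h q ▸ hz : z ∈ x :: q.support) with rfl | h'
          · exact absurd rfl hxz
          · exact h'
        rcases ih hv' hz' with ⟨B1, B2, B3, hB⟩ | ⟨B1, B2, B3, hB⟩
        · exact Or.inl ⟨Walk.cons h B1, B2, B3, by rw [hB, Walk.cons_append]⟩
        · exact Or.inr ⟨Walk.cons h B1, B2, B3, by rw [hB, Walk.cons_append]⟩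

lemma firstReach {x y : V} (p : G.Walk x y) (hp : p.IsPath) (L : List V) (hy : y ∈ L) :
    ∃ (c : V) (r : G.Walk x c), r.IsPath ∧ c ∈ L ∧
      (∀ s ∈ r.support, s ∈ p.support) ∧ (∀ s ∈ r.support, s ∈ L → s = c) ∧
      (∀ f ∈ r.edges, f ∈ p.edges) := by
  induction p with
  | nil =>
    refine ⟨_, Walk.nil, by simp, hy, by simp, ?_, by simp⟩
    intro s hs _
    simpa using hs
  | @cons x b y h q ih =>
    by_cases hxL : x ∈ L
    · refine ⟨x, Walk.nil, by simp, hxL, by simp, ?_, by simp⟩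
      intro s hs _
      simpa using hs
    · obtain ⟨c, r, hr, hcL, hsub, hfirst, hedg⟩ :=
        ih ((Walk.cons_isPath_iff h q).mp hp).1 hy
      refine ⟨c, Walk.cons h r, ?_, hcL, ?_, ?_, ?_⟩
      · rw [Walk.cons_isPath_iff]
        refine ⟨hr, fun hx => ?_⟩
        exact ((Walk.cons_isPath_iff h q).mp hp).2 (hsub x hx)
      · intro s hs
        rw [Walk.support_cons] at hs ⊢
        rcases List.mem_cons.mp hs with rfl | hs
        · exact List.mem_cons_self
        · exact List.mem_cons_of_mem _ (hsub s hs)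
      · intro s hs hsL
        rw [Walk.support_cons] at hs
        rcases List.mem_cons.mp hs with rfl | hs
        · exact absurd hsL hxL
        · exact hfirst s hs hsL
      · intro f hf
        rw [Walk.edges_cons] at hf ⊢
        rcases List.mem_cons.mp hf with rfl | hf
        · exact List.mem_cons_self
        · exact List.mem_cons_of_mem _ (hedg f hf)

end AuxLemmas2
section AuxLemmas3
set_option linter.unusedSectionVars false

open SimpleGraph Walk

variable {G : SimpleGraph V}

lemma mem_tail_of_mem_support_closed {x a : V} {p : G.Walk a a} (hp : ¬ p.Nil)
    (h : x ∈ p.support) : x ∈ p.support.tail := by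
  cases p with
  | nil => exact absurd Walk.Nil.nil hp
  | cons hadj q =>
    rw [Walk.support_cons] at h
    rcases List.mem_cons.mp h with rfl | h'
    · simpa using q.end_mem_support
    · simpa using h'

lemma mem_support_rotate_iff {x u a : V} {p : G.Walk a a} (hp : ¬ p.Nil)
    (h : u ∈ p.support) : x ∈ (p.rotate u h).support ↔ x ∈ p.support := by
  have hperm := (Walk.support_rotate p u h).perm
  constructor
  · intro hx
    rw [(p.rotate u h).support_eq_cons] at hx
    rcases List.mem_cons.mp hx with rfl | hx
    · exact h
    · exact List.mem_of_mem_tail (hperm.mem_iff.mp hx)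
  · intro hx
    have : x ∈ p.support.tail := mem_tail_of_mem_support_closed hp hx
    exact List.mem_of_mem_tail (hperm.mem_iff.mpr this)

lemma mem_support_of_mem_edge {x u v : V} {p : G.Walk u v} {f : Sym2 V}
    (hf : f ∈ p.edges) (hx : x ∈ f) : x ∈ p.support := by
  induction f with
  | _ a b =>
    rcases Sym2.mem_iff.mp hx with rfl | rfl
    · exact p.fst_mem_support_of_mem_edges hf
    · exact p.snd_mem_support_of_mem_edges hf

lemma exists_first_edge {x y : V} (p : G.Walk x y) (hne : x ≠ y) :
    ∃ f ∈ p.edges, x ∈ f := by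
  cases p with
  | nil => exact absurd rfl hne
  | cons hadj q =>
    exact ⟨_, by rw [Walk.edges_cons]; exact List.mem_cons_self, Sym2.mem_mk_left _ _⟩

lemma exists_tripod {D : Set V} (hconn : (G.induce D).Connected)
    {du dv dz : V} (hdu : du ∈ D) (hdv : dv ∈ D) (hdz : dz ∈ D) :
    ∃ (c : V) (Pu : G.Walk c du) (Pv : G.Walk c dv) (Pz : G.Walk c dz),
      c ∈ D ∧ Pu.IsPath ∧ Pv.IsPath ∧ Pz.IsPath ∧
      (∀ s ∈ Pu.support, s ∈ D) ∧ (∀ s ∈ Pv.support, s ∈ D) ∧ (∀ s ∈ Pz.support, s ∈ D) ∧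
      (∀ y, y ∈ Pu.support → y ∈ Pv.support → y = c) ∧
      (∀ y, y ∈ Pu.support → y ∈ Pz.support → y = c) ∧
      (∀ y, y ∈ Pv.support → y ∈ Pz.support → y = c) := by
  classical
  let dHom : G.induce D →g G := ⟨Subtype.val, fun {p q} h => h⟩
  have hinj : Function.Injective dHom := Subtype.val_injective
  -- a path in G from du to dv with support in D
  have getPath : ∀ (d₁ d₂ : V) (h₁ : d₁ ∈ D) (h₂ : d₂ ∈ D),
      ∃ q : G.Walk d₁ d₂, q.IsPath ∧ ∀ s ∈ q.support, s ∈ D := by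
    intro d₁ d₂ h₁ h₂
    obtain ⟨q₀⟩ := hconn.preconnected ⟨d₁, h₁⟩ ⟨d₂, h₂⟩
    refine ⟨(Walk.map dHom (q₀.toPath : (G.induce D).Walk ⟨d₁, h₁⟩ ⟨d₂, h₂⟩)).copy rfl rfl, ?_, ?_⟩
    · rw [Walk.isPath_copy]
      exact Walk.map_isPath_of_injective hinj (q₀.toPath).2
    · intro s hs
      rw [Walk.support_copy, Walk.support_map] at hs
      obtain ⟨⟨s', hs'⟩, _, rfl⟩ := List.mem_map.mp hs
      exact hs'
  obtain ⟨R, hR, hRD⟩ := getPath du dv hdu hdv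
  obtain ⟨S, hS, hSD⟩ := getPath dz du hdz hdu
  obtain ⟨c, r, hr, hcR, hrsub, hrfirst, hredg⟩ := firstReach S hS R.support R.start_mem_support
  -- the two halves of R
  have hdisj2 : ∀ y, y ∈ (R.takeUntil c hcR).support → y ∈ (R.dropUntil c hcR).support →
      y = c := by
    intro y hy1 hy2
    have hnd := hR.support_nodup
    rw [← R.take_spec hcR, Walk.support_append, List.nodup_append] at hnd
    rw [(R.dropUntil c hcR).support_eq_cons] at hy2
    rcases List.mem_cons.mp hy2 with rfl | hy2
    · rfl
    · exact absurd rfl (hnd.2.2 _ hy1 _ hy2)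
  refine ⟨c, (R.takeUntil c hcR).reverse, R.dropUntil c hcR, r.reverse,
    hRD c (R.support_takeUntil_subset hcR (R.takeUntil c hcR).end_mem_support),
    (hR.takeUntil hcR).reverse, hR.dropUntil hcR, hr.reverse, ?_, ?_, ?_, ?_, ?_, ?_⟩
  · intro s hs
    rw [Walk.support_reverse, List.mem_reverse] at hs
    exact hRD s (R.support_takeUntil_subset hcR hs)
  · intro s hs
    exact hRD s (R.support_dropUntil_subset hcR hs)
  · intro s hs
    rw [Walk.support_reverse, List.mem_reverse] at hs
    exact hSD s (hrsub s hs)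
  · intro y hy1 hy2
    rw [Walk.support_reverse, List.mem_reverse] at hy1
    exact hdisj2 y hy1 hy2
  · intro y hy1 hy2
    rw [Walk.support_reverse, List.mem_reverse] at hy1
    rw [Walk.support_reverse, List.mem_reverse] at hy2
    exact hrfirst y hy2 (R.support_takeUntil_subset hcR hy1)
  · intro y hy1 hy2
    rw [Walk.support_reverse, List.mem_reverse] at hy2
    exact hrfirst y hy2 (R.support_dropUntil_subset hcR hy1)

end AuxLemmas3
section AuxCore
set_option linter.unusedSectionVars false

open SimpleGraph Walk

variable {G : SimpleGraph V}

lemma units_key (a1 a2 a3 pu pv pz : ℤˣ)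
    (h1 : a1 * (pv * pu) ≠ a1 * (a2 * a3))
    (h2 : a1 * a2 * (pz * pu) ≠ a1 * (a2 * a3)) :
    a3 * a1 * (pv * pz) = a1 * (a2 * a3) := by
  rcases Int.units_eq_one_or a1 with h | h <;> subst h <;>
  rcases Int.units_eq_one_or a2 with h | h <;> subst h <;>
  rcases Int.units_eq_one_or a3 with h | h <;> subst h <;>
  rcases Int.units_eq_one_or pu with h | h <;> subst h <;>
  rcases Int.units_eq_one_or pv with h | h <;> subst h <;>
  rcases Int.units_eq_one_or pz with h | h <;> subst h <;>
  first
    | rfl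
    | (exact absurd rfl h1)
    | (exact absurd rfl h2)
    | decide

lemma core (σ : Sym2 V → ℤˣ) {u v z c : V}
    (huv : u ≠ v) (hvz : v ≠ z) (hzu : z ≠ u)
    (hcu : c ≠ u) (hcv : c ≠ v) (hcz : c ≠ z)
    {A1 : G.Walk u v} {A2 : G.Walk v z} {A3 : G.Walk z u}
    (hC : (A1.append (A2.append A3)).IsCycle)
    {Pu : G.Walk c u} {Pv : G.Walk c v} {Pz : G.Walk c z}
    (hPu : Pu.IsPath) (hPv : Pv.IsPath) (hPz : Pz.IsPath)
    (huvP : ∀ y, y ∈ Pu.support → y ∈ Pv.support → y = c)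
    (huzP : ∀ y, y ∈ Pu.support → y ∈ Pz.support → y = c)
    (hvzP : ∀ y, y ∈ Pv.support → y ∈ Pz.support → y = c)
    (hPC : ∀ y, (y ∈ Pu.support ∨ y ∈ Pv.support ∨ y ∈ Pz.support) →
        (y ∈ A1.support ∨ y ∈ A2.support ∨ y ∈ A3.support) → (y = u ∨ y = v ∨ y = z))
    (hEC : ∀ f, (f ∈ A1.edges ∨ f ∈ A2.edges ∨ f ∈ A3.edges) →
        f ∉ Pu.edges ∧ f ∉ Pv.edges ∧ f ∉ Pz.edges)
    {e : Sym2 V} (he : e ∈ A1.edges) :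
    ∃ s₂ : Finset (Sym2 V), (A1.append (A2.append A3)).edges.toFinset ≠ s₂ ∧
      IsCircleOf G s₂ ∧ e ∈ s₂ ∧
      esign σ s₂ = esign σ (A1.append (A2.append A3)).edges.toFinset := by
  classical
  -- decompositions of the cycle at the three rotations
  obtain ⟨hA1, hA23, hs1, he1⟩ := cycle_decomp2 huv hC
  have hC2 : (A2.append (A3.append A1)).IsCycle := by
    have := isCycle_rotate2 huv hC
    rwa [← Walk.append_assoc] at this
  obtain ⟨hA2, hA31, hs2, he2⟩ := cycle_decomp2 hvz hC2
  have hC3 : (A3.append (A1.append A2)).IsCycle := by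
    have := isCycle_rotate2 hvz hC2
    rwa [← Walk.append_assoc] at this
  obtain ⟨hA3, hA12, hs3, he3⟩ := cycle_decomp2 hzu hC3
  -- non-membership of opposite endpoints
  have hzA1 : z ∉ A1.support := by
    intro h
    rcases hs1 z h (by rw [Walk.mem_support_append_iff]; exact Or.inl A2.end_mem_support)
      with h' | h'
    · exact hzu h'
    · exact hvz h'.symm
  have huA2 : u ∉ A2.support := by
    intro h
    rcases hs2 u h (by rw [Walk.mem_support_append_iff]; exact Or.inl A3.end_mem_support)
      with h' | h'
    · exact huv h'
    · exact hzu h'.symm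
  have hvA3 : v ∉ A3.support := by
    intro h
    rcases hs3 v h (by rw [Walk.mem_support_append_iff]; exact Or.inl A1.end_mem_support)
      with h' | h'
    · exact hvz h'
    · exact huv h'.symm
  -- the three new cycles
  have hQ1 : (Pv.reverse.append Pu).IsPath := by
    refine isPath_append' hPv.reverse hPu fun y hy1 hy2 => ?_
    rw [Walk.support_reverse, List.mem_reverse] at hy1
    exact huvP y hy2 hy1
  have hK1 : (A1.append (Pv.reverse.append Pu)).IsCycle := by
    refine isCycle_append' huv hA1 hQ1 ?_ ?_
    · intro y hyA hyQ
      rw [Walk.mem_support_append_iff, Walk.support_reverse, List.mem_reverse] at hyQ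
      rcases hPC y (by tauto) (Or.inl hyA) with h | h | h
      · exact Or.inl h
      · exact Or.inr h
      · exact absurd (h ▸ hyA) hzA1
    · intro f hf hf'
      have h3 := hEC f (Or.inl hf)
      rw [Walk.edges_append, List.mem_append, Walk.edges_reverse, List.mem_reverse] at hf'
      tauto
  have hQ2 : (Pz.reverse.append Pu).IsPath := by
    refine isPath_append' hPz.reverse hPu fun y hy1 hy2 => ?_
    rw [Walk.support_reverse, List.mem_reverse] at hy1
    exact huzP y hy2 hy1
  have hK2 : ((A1.append A2).append (Pz.reverse.append Pu)).IsCycle := by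
    refine isCycle_append' hzu.symm hA12 hQ2 ?_ ?_
    · intro y hyA hyQ
      rw [Walk.mem_support_append_iff] at hyA
      rw [Walk.mem_support_append_iff, Walk.support_reverse, List.mem_reverse] at hyQ
      rcases hPC y (by tauto) (by tauto) with h | h | h
      · exact Or.inl h
      · subst h
        exfalso
        rcases hyQ with h' | h'
        · exact hcv (hvzP y Pv.end_mem_support h').symm
        · exact hcv (huvP y h' Pv.end_mem_support).symm
      · exact Or.inr h
    · intro f hf hf'
      rw [Walk.edges_append, List.mem_append] at hf
      have h3 := hEC f (by tauto)
      rw [Walk.edges_append, List.mem_append, Walk.edges_reverse, List.mem_reverse] at hf'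
      tauto
  have hQ3 : (Pv.reverse.append Pz).IsPath := by
    refine isPath_append' hPv.reverse hPz fun y hy1 hy2 => ?_
    rw [Walk.support_reverse, List.mem_reverse] at hy1
    exact hvzP y hy1 hy2
  have hK3 : ((A3.append A1).append (Pv.reverse.append Pz)).IsCycle := by
    refine isCycle_append' hvz.symm hA31 hQ3 ?_ ?_
    · intro y hyA hyQ
      rw [Walk.mem_support_append_iff] at hyA
      rw [Walk.mem_support_append_iff, Walk.support_reverse, List.mem_reverse] at hyQ
      rcases hPC y (by tauto) (by tauto) with h | h | h
      · subst h
        exfalso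
        rcases hyQ with h' | h'
        · exact hcu (huvP y Pu.end_mem_support h').symm
        · exact hcu (huzP y Pu.end_mem_support h').symm
      · exact Or.inr h
      · exact Or.inl h
    · intro f hf hf'
      rw [Walk.edges_append, List.mem_append] at hf
      have h3 := hEC f (by tauto)
      rw [Walk.edges_append, List.mem_append, Walk.edges_reverse, List.mem_reverse] at hf'
      tauto
  -- sign computations
  have hW : wsign σ (A1.append (A2.append A3)) =
      wsign σ A1 * (wsign σ A2 * wsign σ A3) := by
    simp only [wsign_append]
  have w1 : wsign σ (A1.append (Pv.reverse.append Pu)) =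
      wsign σ A1 * (wsign σ Pv * wsign σ Pu) := by
    simp only [wsign_append, wsign_reverse]
  have w2 : wsign σ ((A1.append A2).append (Pz.reverse.append Pu)) =
      wsign σ A1 * wsign σ A2 * (wsign σ Pz * wsign σ Pu) := by
    simp only [wsign_append, wsign_reverse]
  have w3 : wsign σ ((A3.append A1).append (Pv.reverse.append Pz)) =
      wsign σ A3 * wsign σ A1 * (wsign σ Pv * wsign σ Pz) := by
    simp only [wsign_append, wsign_reverse]
  have hesW : esign σ (A1.append (A2.append A3)).edges.toFinset =
      wsign σ (A1.append (A2.append A3)) :=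
    esign_eq_wsign σ hC.isCircuit.isTrail.edges_nodup
  -- a tripod edge through c not on the cycle, from Pu
  obtain ⟨fu, hfu, hcfu⟩ := exists_first_edge Pu hcu
  have hfuW : fu ∉ (A1.append (A2.append A3)).edges := by
    intro hfW
    rw [Walk.edges_append, List.mem_append, Walk.edges_append, List.mem_append] at hfW
    exact (hEC fu (by tauto)).1 hfu
  obtain ⟨fz, hfz, hcfz⟩ := exists_first_edge Pz hcz
  have hfzW : fz ∉ (A1.append (A2.append A3)).edges := by
    intro hfW
    rw [Walk.edges_append, List.mem_append, Walk.edges_append, List.mem_append] at hfW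
    exact (hEC fz (by tauto)).2.2 hfz
  by_cases h1 : wsign σ (A1.append (Pv.reverse.append Pu)) =
      wsign σ (A1.append (A2.append A3))
  · refine ⟨(A1.append (Pv.reverse.append Pu)).edges.toFinset, ?_, ⟨u, _, hK1, rfl⟩, ?_, ?_⟩
    · intro hEq
      apply hfuW
      rw [← List.mem_toFinset, hEq, List.mem_toFinset]
      rw [Walk.edges_append, List.mem_append, Walk.edges_append, List.mem_append]
      exact Or.inr (Or.inr hfu)
    · rw [List.mem_toFinset, Walk.edges_append, List.mem_append]
      exact Or.inl he
    · rw [esign_eq_wsign σ hK1.isCircuit.isTrail.edges_nodup, hesW]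
      exact h1
  · by_cases h2 : wsign σ ((A1.append A2).append (Pz.reverse.append Pu)) =
        wsign σ (A1.append (A2.append A3))
    · refine ⟨((A1.append A2).append (Pz.reverse.append Pu)).edges.toFinset, ?_,
        ⟨u, _, hK2, rfl⟩, ?_, ?_⟩
      · intro hEq
        apply hfuW
        rw [← List.mem_toFinset, hEq, List.mem_toFinset]
        simp only [Walk.edges_append, List.mem_append]
        tauto
      · rw [List.mem_toFinset, Walk.edges_append, List.mem_append,
          Walk.edges_append, List.mem_append]
        exact Or.inl (Or.inl he)
      · rw [esign_eq_wsign σ hK2.isCircuit.isTrail.edges_nodup, hesW]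
        exact h2
    · refine ⟨((A3.append A1).append (Pv.reverse.append Pz)).edges.toFinset, ?_,
        ⟨z, _, hK3, rfl⟩, ?_, ?_⟩
      · intro hEq
        apply hfzW
        rw [← List.mem_toFinset, hEq, List.mem_toFinset]
        simp only [Walk.edges_append, List.mem_append]
        tauto
      · rw [List.mem_toFinset, Walk.edges_append, List.mem_append,
          Walk.edges_append, List.mem_append]
        exact Or.inl (Or.inr he)
      · rw [esign_eq_wsign σ hK3.isCircuit.isTrail.edges_nodup, hesW, w3, hW]
        rw [w1, hW] at h1
        rw [w2, hW] at h2
        exact units_key _ _ _ _ _ _ h1 h2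

end AuxCore
section AuxAssemble
set_option linter.unusedSectionVars false

open SimpleGraph Walk

variable {G : SimpleGraph V}

lemma or3_left {a b c : Prop} (h : a ∨ b ∨ c) : b ∨ c ∨ a :=
  h.elim (fun h => Or.inr (Or.inr h)) (fun h => h.elim Or.inl (fun h => Or.inr (Or.inl h)))

lemma or3_right {a b c : Prop} (h : a ∨ b ∨ c) : c ∨ a ∨ b :=
  h.elim (fun h => Or.inr (Or.inl h)) (fun h => h.elim (fun h => Or.inr (Or.inr h)) Or.inl)

lemma perm_rot3 {α : Type*} (l1 l2 l3 : List α) : (l2 ++ (l3 ++ l1)).Perm (l1 ++ (l2 ++ l3)) := by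
  rw [← List.append_assoc]
  exact List.perm_append_comm

lemma leg_props {c d t : V} {P0 : G.Walk c d} (hP0 : P0.IsPath) {D : Set V}
    (hsub : ∀ s ∈ P0.support, s ∈ D) (htD : t ∉ D) (hadj : G.Adj d t) :
    (P0.append (Walk.cons hadj Walk.nil)).IsPath ∧
    (P0.append (Walk.cons hadj Walk.nil)).support = P0.support ++ [t] ∧
    (∀ f ∈ (P0.append (Walk.cons hadj Walk.nil)).edges, ∃ x ∈ D, x ∈ f) := by
  have hdt : d ≠ t := fun h => htD (h ▸ hsub d P0.end_mem_support)
  have hsupEq : (P0.append (Walk.cons hadj Walk.nil)).support = P0.support ++ [t] := by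
    rw [Walk.support_append]; simp
  refine ⟨?_, hsupEq, ?_⟩
  · refine isPath_append' hP0 (by simp [Walk.cons_isPath_iff, hdt]) ?_
    intro y hy1 hy2
    simp only [Walk.support_cons, Walk.support_nil, List.mem_cons, List.not_mem_nil, or_false] at hy2
    rcases hy2 with rfl | rfl
    · rfl
    · exact absurd (hsub y hy1) htD
  · intro f hf
    rw [Walk.edges_append, List.mem_append] at hf
    rcases hf with hf | hf
    · refine ⟨f.out.1, ?_, Sym2.out_fst_mem f⟩
      exact hsub _ (mem_support_of_mem_edge hf (Sym2.out_fst_mem f))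
    · simp only [Walk.edges_cons, Walk.edges_nil, List.mem_singleton] at hf
      subst hf
      exact ⟨d, hsub d P0.end_mem_support, Sym2.mem_mk_left _ _⟩

lemma applyCore (σ : Sym2 V → ℤˣ) {u v z c : V}
    (huv : u ≠ v) (hvz : v ≠ z) (hzu : z ≠ u)
    (hcu : c ≠ u) (hcv : c ≠ v) (hcz : c ≠ z)
    {B1 : G.Walk u v} {B2 : G.Walk v z} {B3 : G.Walk z u}
    (hcyc : (B1.append (B2.append B3)).IsCycle)
    {W0 : Finset (Sym2 V)}
    (hfin : (B1.append (B2.append B3)).edges.toFinset = W0)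
    {Pu : G.Walk c u} {Pv : G.Walk c v} {Pz : G.Walk c z}
    (hPu : Pu.IsPath) (hPv : Pv.IsPath) (hPz : Pz.IsPath)
    (huvP : ∀ y, y ∈ Pu.support → y ∈ Pv.support → y = c)
    (huzP : ∀ y, y ∈ Pu.support → y ∈ Pz.support → y = c)
    (hvzP : ∀ y, y ∈ Pv.support → y ∈ Pz.support → y = c)
    (hPC : ∀ y, (y ∈ Pu.support ∨ y ∈ Pv.support ∨ y ∈ Pz.support) →
        (y ∈ B1.support ∨ y ∈ B2.support ∨ y ∈ B3.support) → (y = u ∨ y = v ∨ y = z))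
    (hEC : ∀ f, (f ∈ B1.edges ∨ f ∈ B2.edges ∨ f ∈ B3.edges) →
        f ∉ Pu.edges ∧ f ∉ Pv.edges ∧ f ∉ Pz.edges)
    {e : Sym2 V} (he : e ∈ B1.edges ∨ e ∈ B2.edges ∨ e ∈ B3.edges) :
    ∃ s₂ : Finset (Sym2 V), W0 ≠ s₂ ∧ IsCircleOf G s₂ ∧ e ∈ s₂ ∧
      esign σ s₂ = esign σ W0 := by
  have hcyc₂ : (B2.append (B3.append B1)).IsCycle := by
    have := isCycle_rotate2 huv hcyc
    rwa [← Walk.append_assoc] at this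
  have hcyc₃ : (B3.append (B1.append B2)).IsCycle := by
    have := isCycle_rotate2 hvz hcyc₂
    rwa [← Walk.append_assoc] at this
  have hfin₂ : (B2.append (B3.append B1)).edges.toFinset = W0 := by
    rw [← hfin]
    apply List.toFinset_eq_of_perm
    simp only [Walk.edges_append]
    exact perm_rot3 _ _ _
  have hfin₃ : (B3.append (B1.append B2)).edges.toFinset = W0 := by
    rw [← hfin₂]
    apply List.toFinset_eq_of_perm
    simp only [Walk.edges_append]
    exact perm_rot3 _ _ _
  rcases he with he | he | he
  · obtain ⟨s₂, hne, hcirc, hmem, hsig⟩ := core σ huv hvz hzu hcu hcv hcz hcyc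
      hPu hPv hPz huvP huzP hvzP hPC hEC he
    rw [hfin] at hne hsig
    exact ⟨s₂, hne, hcirc, hmem, hsig⟩
  · obtain ⟨s₂, hne, hcirc, hmem, hsig⟩ := core σ hvz hzu huv hcv hcz hcu hcyc₂
      hPv hPz hPu hvzP (fun y h1 h2 => huvP y h2 h1) (fun y h1 h2 => huzP y h2 h1)
      (fun y h1 h2 => or3_left (hPC y (or3_right h1) (or3_right h2)))
      (fun f hf => ⟨(hEC f (or3_right hf)).2.1, (hEC f (or3_right hf)).2.2,
        (hEC f (or3_right hf)).1⟩) he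
    rw [hfin₂] at hne hsig
    exact ⟨s₂, hne, hcirc, hmem, hsig⟩
  · obtain ⟨s₂, hne, hcirc, hmem, hsig⟩ := core σ hzu huv hvz hcz hcu hcv hcyc₃
      hPz hPu hPv (fun y h1 h2 => huzP y h2 h1) (fun y h1 h2 => hvzP y h2 h1) huvP
      (fun y h1 h2 => or3_right (hPC y (or3_left h1) (or3_left h2)))
      (fun f hf => ⟨(hEC f (or3_left hf)).2.2, (hEC f (or3_left hf)).1,
        (hEC f (or3_left hf)).2.1⟩) he
    rw [hfin₃] at hne hsig
    exact ⟨s₂, hne, hcirc, hmem, hsig⟩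

end AuxAssemble

lemma or3_swap23 {a b c : Prop} (h : a ∨ b ∨ c) : a ∨ c ∨ b :=
  h.elim Or.inl (fun h => h.elim (fun h => Or.inr (Or.inr h)) (fun h => Or.inr (Or.inl h)))

theorem bridge_three_attachments_not_battery {V : Type*} [DecidableEq V]
    (G : SimpleGraph V) (σ : Sym2 V → ℤˣ) (hG : IsBlock G)
    {a : V} (w : G.Walk a a) (hw : w.IsCycle)
    (e : Sym2 V) (he : e ∈ w.edges)
    (F : Set (Sym2 V)) (hF : IsBridgeOf G w F)
    (hatt : 3 ≤ (attachments G w F).ncard) :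
    ∃ s₁ s₂ : Finset (Sym2 V), s₁ ≠ s₂ ∧
      (IsCircleOf G s₁ ∧ e ∈ s₁ ∧ esign σ s₁ = esign σ w.edges.toFinset) ∧
      (IsCircleOf G s₂ ∧ e ∈ s₂ ∧ esign σ s₂ = esign σ w.edges.toFinset) := by
  classical
  clear hG
  rcases hF with ⟨x, y, hxy, hxs, hys, hadj, hns, rfl⟩ | ⟨D, hDne, hDdisj, hDconn, hDcl, rfl⟩
  · -- a chord has only two attachments
    exfalso
    have hsub : attachments G w {s(x, y)} ⊆ {x, y} := by
      rintro t ⟨ht, f, hf, htf⟩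
      rw [Set.mem_singleton_iff] at hf
      subst hf
      rcases Sym2.mem_iff.mp htf with rfl | rfl
      · exact Set.mem_insert _ _
      · exact Set.mem_insert_of_mem _ rfl
    have h2 := Set.ncard_le_ncard hsub (Set.toFinite _)
    rw [Set.ncard_pair hxy] at h2
    omega
  · -- proper bridge case
    obtain ⟨T, hTsub, hT3⟩ := Set.exists_subset_card_eq hatt
    obtain ⟨u, v, z, huv, huz, hvz, rfl⟩ := Set.ncard_eq_three.mp hT3
    have hu := hTsub (show u ∈ ({u, v, z} : Set V) by simp)
    have hv := hTsub (show v ∈ ({u, v, z} : Set V) by simp)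
    have hz := hTsub (show z ∈ ({u, v, z} : Set V) by simp)
    have getd : ∀ t ∈ attachments G w {e | e ∈ G.edgeSet ∧ ∃ x ∈ D, x ∈ e},
        t ∈ w.support ∧ ∃ d ∈ D, G.Adj t d := by
      rintro t ⟨ht, f, ⟨hfE, d, hdD, hdf⟩, htf⟩
      refine ⟨ht, d, hdD, ?_⟩
      have htd : t ≠ d := fun h => hDdisj d hdD (h ▸ ht)
      have hf : f = s(t, d) :=
        Sym2.eq_of_ne_mem htd htf hdf (Sym2.mem_mk_left _ _) (Sym2.mem_mk_right _ _)
      rw [hf] at hfE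
      exact hfE
    obtain ⟨huS, du, hduD, hadju⟩ := getd u hu
    obtain ⟨hvS, dv, hdvD, hadjv⟩ := getd v hv
    obtain ⟨hzS, dz, hdzD, hadjz⟩ := getd z hz
    have huD : u ∉ D := fun hD => hDdisj u hD huS
    have hvD : v ∉ D := fun hD => hDdisj v hD hvS
    have hzD : z ∉ D := fun hD => hDdisj z hD hzS
    obtain ⟨c, P0u, P0v, P0z, hcD, hP0u, hP0v, hP0z, hsu, hsv, hsz, huv0, huz0, hvz0⟩ :=
      exists_tripod hDconn hduD hdvD hdzD
    obtain ⟨hPu, hSu, hEu⟩ := leg_props hP0u hsu huD hadju.symm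
    obtain ⟨hPv, hSv, hEv⟩ := leg_props hP0v hsv hvD hadjv.symm
    obtain ⟨hPz, hSz, hEz⟩ := leg_props hP0z hsz hzD hadjz.symm
    set Pu := P0u.append (Walk.cons hadju.symm Walk.nil) with hPudef
    set Pv := P0v.append (Walk.cons hadjv.symm Walk.nil) with hPvdef
    set Pz := P0z.append (Walk.cons hadjz.symm Walk.nil) with hPzdef
    have hPuv : ∀ y, y ∈ Pu.support → y ∈ Pv.support → y = c := by
      intro y h1 h2
      rw [hSu, List.mem_append, List.mem_singleton] at h1
      rw [hSv, List.mem_append, List.mem_singleton] at h2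
      rcases h1 with h1 | h1
      · rcases h2 with h2 | h2
        · exact huv0 y h1 h2
        · exact absurd (hsu y h1) (by rw [h2]; exact hvD)
      · rcases h2 with h2 | h2
        · exact absurd (hsv y h2) (by rw [h1]; exact huD)
        · exact absurd (h1.symm.trans h2) huv
    have hPuz : ∀ y, y ∈ Pu.support → y ∈ Pz.support → y = c := by
      intro y h1 h2
      rw [hSu, List.mem_append, List.mem_singleton] at h1
      rw [hSz, List.mem_append, List.mem_singleton] at h2
      rcases h1 with h1 | h1
      · rcases h2 with h2 | h2
        · exact huz0 y h1 h2
        · exact absurd (hsu y h1) (by rw [h2]; exact hzD)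
      · rcases h2 with h2 | h2
        · exact absurd (hsz y h2) (by rw [h1]; exact huD)
        · exact absurd (h1.symm.trans h2) huz
    have hPvz : ∀ y, y ∈ Pv.support → y ∈ Pz.support → y = c := by
      intro y h1 h2
      rw [hSv, List.mem_append, List.mem_singleton] at h1
      rw [hSz, List.mem_append, List.mem_singleton] at h2
      rcases h1 with h1 | h1
      · rcases h2 with h2 | h2
        · exact hvz0 y h1 h2
        · exact absurd (hsv y h1) (by rw [h2]; exact hzD)
      · rcases h2 with h2 | h2
        · exact absurd (hsz y h2) (by rw [h1]; exact hvD)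
        · exact absurd (h1.symm.trans h2) hvz
    have hPCbase : ∀ y, (y ∈ Pu.support ∨ y ∈ Pv.support ∨ y ∈ Pz.support) →
        y ∈ w.support → (y = u ∨ y = v ∨ y = z) := by
      intro y hy hyS
      rcases hy with h | h | h
      · rw [hSu, List.mem_append, List.mem_singleton] at h
        rcases h with h | h
        · exact absurd hyS (hDdisj y (hsu y h))
        · exact Or.inl h
      · rw [hSv, List.mem_append, List.mem_singleton] at h
        rcases h with h | h
        · exact absurd hyS (hDdisj y (hsv y h))
        · exact Or.inr (Or.inl h)
      · rw [hSz, List.mem_append, List.mem_singleton] at h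
        rcases h with h | h
        · exact absurd hyS (hDdisj y (hsz y h))
        · exact Or.inr (Or.inr h)
    have hECbase : ∀ f, f ∈ w.edges → f ∉ Pu.edges ∧ f ∉ Pv.edges ∧ f ∉ Pz.edges := by
      intro f hf
      refine ⟨fun hfe => ?_, fun hfe => ?_, fun hfe => ?_⟩
      · obtain ⟨x, hxD, hxf⟩ := hEu f hfe
        exact hDdisj x hxD (mem_support_of_mem_edge hf hxf)
      · obtain ⟨x, hxD, hxf⟩ := hEv f hfe
        exact hDdisj x hxD (mem_support_of_mem_edge hf hxf)
      · obtain ⟨x, hxD, hxf⟩ := hEz f hfe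
        exact hDdisj x hxD (mem_support_of_mem_edge hf hxf)
    have hcu : c ≠ u := fun h => hDdisj c hcD (by rw [h]; exact huS)
    have hcv : c ≠ v := fun h => hDdisj c hcD (by rw [h]; exact hvS)
    have hcz : c ≠ z := fun h => hDdisj c hcD (by rw [h]; exact hzS)
    -- rotate the circle to start at u
    have hwnil : ¬ w.Nil := hw.not_nil
    have hw' : (w.rotate u huS).IsCycle := hw.rotate huS
    have hperm : (w.rotate u huS).edges.Perm w.edges := (w.rotate_edges u huS).perm
    have hTF : (w.rotate u huS).edges.toFinset = w.edges.toFinset :=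
      List.toFinset_eq_of_perm _ _ hperm
    have hvw' : v ∈ (w.rotate u huS).support := (mem_support_rotate_iff hwnil huS).mpr hvS
    have hzw' : z ∈ (w.rotate u huS).support := (mem_support_rotate_iff hwnil huS).mpr hzS
    have hsupp' : ∀ y, y ∈ (w.rotate u huS).support → y ∈ w.support :=
      fun y hy => (mem_support_rotate_iff hwnil huS).mp hy
    have he' : e ∈ (w.rotate u huS).edges := hperm.mem_iff.mpr he
    rcases split3 (w.rotate u huS) v z hvw' hzw' hvz with
      ⟨B1, B2, B3, hsp⟩ | ⟨B1, B2, B3, hsp⟩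
    · have hcyc : (B1.append (B2.append B3)).IsCycle := by rw [← hsp]; exact hw'
      have hfin : (B1.append (B2.append B3)).edges.toFinset = w.edges.toFinset := by
        rw [← hsp]; exact hTF
      have harcsup : ∀ y, (y ∈ B1.support ∨ y ∈ B2.support ∨ y ∈ B3.support) →
          y ∈ w.support := by
        intro y hy
        apply hsupp'
        rw [hsp, Walk.mem_support_append_iff, Walk.mem_support_append_iff]
        tauto
      have harcedg : ∀ f, (f ∈ B1.edges ∨ f ∈ B2.edges ∨ f ∈ B3.edges) → f ∈ w.edges := by
        intro f hf
        apply hperm.mem_iff.mp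
        rw [hsp]
        simp only [Walk.edges_append, List.mem_append]
        tauto
      have he3 : e ∈ B1.edges ∨ e ∈ B2.edges ∨ e ∈ B3.edges := by
        have h := he'
        rw [hsp] at h
        simp only [Walk.edges_append, List.mem_append] at h
        tauto
      obtain ⟨s₂, hneq, hcirc, hmem, hsig⟩ :=
        applyCore σ huv hvz huz.symm hcu hcv hcz hcyc hfin hPu hPv hPz hPuv hPuz hPvz
          (fun y hy hyA => hPCbase y hy (harcsup y hyA))
          (fun f hf => hECbase f (harcedg f hf)) he3
      exact ⟨w.edges.toFinset, s₂, hneq, ⟨⟨a, w, hw, rfl⟩, List.mem_toFinset.mpr he, rfl⟩,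
        hcirc, hmem, hsig⟩
    · have hcyc : (B1.append (B2.append B3)).IsCycle := by rw [← hsp]; exact hw'
      have hfin : (B1.append (B2.append B3)).edges.toFinset = w.edges.toFinset := by
        rw [← hsp]; exact hTF
      have harcsup : ∀ y, (y ∈ B1.support ∨ y ∈ B2.support ∨ y ∈ B3.support) →
          y ∈ w.support := by
        intro y hy
        apply hsupp'
        rw [hsp, Walk.mem_support_append_iff, Walk.mem_support_append_iff]
        tauto
      have harcedg : ∀ f, (f ∈ B1.edges ∨ f ∈ B2.edges ∨ f ∈ B3.edges) → f ∈ w.edges := by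
        intro f hf
        apply hperm.mem_iff.mp
        rw [hsp]
        simp only [Walk.edges_append, List.mem_append]
        tauto
      have he3 : e ∈ B1.edges ∨ e ∈ B2.edges ∨ e ∈ B3.edges := by
        have h := he'
        rw [hsp] at h
        simp only [Walk.edges_append, List.mem_append] at h
        tauto
      obtain ⟨s₂, hneq, hcirc, hmem, hsig⟩ :=
        applyCore σ huz hvz.symm huv.symm hcu hcz hcv hcyc hfin hPu hPz hPv hPuz hPuv
          (fun y h1 h2 => hPvz y h2 h1)
          (fun y hy hyA => or3_swap23 (hPCbase y (or3_swap23 hy) (harcsup y hyA)))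
          (fun f hf => ⟨(hECbase f (harcedg f hf)).1, (hECbase f (harcedg f hf)).2.2,
            (hECbase f (harcedg f hf)).2.1⟩) he3
      exact ⟨w.edges.toFinset, s₂, hneq, ⟨⟨a, w, hw, rfl⟩, List.mem_toFinset.mpr he, rfl⟩,
        hcirc, hmem, hsig⟩
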